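/- Let m, n be positive integers, let A1, A2 be arbitrary m×n complex matrices, and let A3 (n×n) and A4 (m×m) be Hermitian positive definite complex matrices. Then ∫ DS exp(−tr(A3 Sᴴ A4 S + A1ᴴ S − Sᴴ A2)) = det(A3 ⊗ A4)^{−1} · exp(−tr(A3^{−1} A1ᴴ A4^{−1} A2)), where the integral ranges over all m×n complex matrices S and ⊗ denotes the Kronecker product of matrices. -/

import Mathlib

open MeasureTheory Matrix Complex
open scoped Kronecker ComplexOrder

lemma measPres_of_orth {E : Type*} [NormedAddCommGroup E] [NormedSpace ℝ E]
    [MeasurableSpace E] [BorelSpace E] [FiniteDimensional ℝ E]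
    {κ : Type*} [Fintype κ] [DecidableEq κ] (bE : Module.Basis κ ℝ E)
    (μ : Measure E) [μ.IsAddHaarMeasure] (L : E →ₗ[ℝ] E)
    (H : ∀ x y : E, ∑ k, bE.repr (L x) k * bE.repr (L y) k
        = ∑ k, bE.repr x k * bE.repr y k) :
    MeasurePreserving L μ μ := by
  set A := LinearMap.toMatrix bE bE L with hA
  have hAA : Aᵀ * A = 1 := by
    ext i j
    have h := H (bE i) (bE j)
    simp only [Module.Basis.repr_self, Finsupp.single_apply] at h
    rw [Matrix.mul_apply, Matrix.one_apply]
    simp only [Matrix.transpose_apply, hA, LinearMap.toMatrix_apply]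
    rw [h]
    simp [Finset.sum_ite_eq', mul_ite, ite_mul, eq_comm]
  have hdet2 : LinearMap.det L * LinearMap.det L = 1 := by
    have h := congrArg Matrix.det hAA
    rw [Matrix.det_mul, Matrix.det_transpose, Matrix.det_one] at h
    rwa [← LinearMap.det_toMatrix bE]
  have hd : LinearMap.det L = 1 ∨ LinearMap.det L = -1 := mul_self_eq_one_iff.mp hdet2
  have hd0 : LinearMap.det L ≠ 0 := by rcases hd with h | h <;> rw [h] <;> norm_num
  have habs : |(LinearMap.det L)⁻¹| = 1 := by rcases hd with h | h <;> rw [h] <;> norm_num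
  refine ⟨L.continuous_of_finiteDimensional.measurable, ?_⟩
  rw [Measure.map_linearMap_addHaar_eq_smul_addHaar μ hd0, habs]
  simp
open MeasureTheory Matrix Complex

variable {m n : ℕ}

lemma frob_inv (U : Matrix (Fin m) (Fin m) ℂ) (W : Matrix (Fin n) (Fin n) ℂ)
    (hU : Uᴴ * U = 1) (hW : W * Wᴴ = 1) (S T : Matrix (Fin m) (Fin n) ℂ) :
    Matrix.trace ((U * S * W)ᴴ * (U * T * W)) = Matrix.trace (Sᴴ * T) := by
  have h : (U * S * W)ᴴ * (U * T * W) = Wᴴ * (Sᴴ * T) * W := by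
    rw [conjTranspose_mul, conjTranspose_mul]
    simp only [Matrix.mul_assoc]
    rw [← Matrix.mul_assoc Uᴴ U (T * W), hU, Matrix.one_mul]
  rw [h, Matrix.trace_mul_cycle, ← Matrix.mul_assoc, hW, Matrix.one_mul]

lemma trace_conj_entries (S T : Matrix (Fin m) (Fin n) ℂ) :
    Matrix.trace (Sᴴ * T) = ∑ i, ∑ j, (starRingEnd ℂ) (S i j) * T i j := by
  rw [Matrix.trace]
  simp only [Matrix.diag_apply, Matrix.mul_apply, Matrix.conjTranspose_apply]
  rw [Finset.sum_comm]
  rfl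

noncomputable def mulLR (U : Matrix (Fin m) (Fin m) ℂ) (W : Matrix (Fin n) (Fin n) ℂ) :
    (Fin m → Fin n → ℂ) →ₗ[ℝ] (Fin m → Fin n → ℂ) where
  toFun S := fun i j => (U * Matrix.of S * W) i j
  map_add' S T := by
    funext i j
    show (U * Matrix.of (S + T) * W) i j = (U * Matrix.of S * W) i j + (U * Matrix.of T * W) i j
    have h : Matrix.of (S + T) = Matrix.of S + Matrix.of T := rfl
    rw [h, Matrix.mul_add, Matrix.add_mul, Matrix.add_apply]
  map_smul' r S := by
    funext i j
    show (U * Matrix.of (r • S) * W) i j = r • ((U * Matrix.of S * W) i j)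
    have h : Matrix.of (r • S) = r • Matrix.of S := rfl
    rw [h, Matrix.mul_smul, Matrix.smul_mul, Matrix.smul_apply]

lemma measPres_mulLR (U : Matrix (Fin m) (Fin m) ℂ) (W : Matrix (Fin n) (Fin n) ℂ)
    (hU : Uᴴ * U = 1) (hW : W * Wᴴ = 1) :
    MeasurePreserving (mulLR U W) (volume : Measure (Fin m → Fin n → ℂ)) volume := by
  haveI : ((volume : Measure (Fin m → Fin n → ℂ))).IsOpenPosMeasure :=
    MeasureTheory.Measure.pi.isOpenPosMeasure _
  haveI : ((volume : Measure (Fin m → Fin n → ℂ))).IsAddHaarMeasure := ⟨⟩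
  refine measPres_of_orth
    (Pi.basis (fun _ : Fin m => Pi.basis (fun _ : Fin n => Complex.basisOneI))) volume _ ?_
  have key : ∀ X Y : Fin m → Fin n → ℂ,
      (∑ k : (i : Fin m) × ((j : Fin n) × Fin 2),
        (Pi.basis (fun _ : Fin m => Pi.basis (fun _ : Fin n => Complex.basisOneI))).repr X k *
        (Pi.basis (fun _ : Fin m => Pi.basis (fun _ : Fin n => Complex.basisOneI))).repr Y k)
      = (Matrix.trace ((Matrix.of X)ᴴ * Matrix.of Y)).re := by
    intro X Y
    rw [trace_conj_entries, Complex.re_sum]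
    rw [← Finset.univ_sigma_univ, Finset.sum_sigma]
    refine Finset.sum_congr rfl fun i _ => ?_
    rw [Complex.re_sum, ← Finset.univ_sigma_univ, Finset.sum_sigma]
    refine Finset.sum_congr rfl fun j _ => ?_
    simp [Fin.sum_univ_two, Pi.basis_repr, Complex.mul_re]
  intro S T
  rw [key, key]
  have hm : ∀ Z : Fin m → Fin n → ℂ, Matrix.of ((mulLR U W) Z) = U * Matrix.of Z * W := by
    intro Z; rfl
  rw [hm, hm]
  congr 1
  exact frob_inv U W hU hW (Matrix.of S) (Matrix.of T)
variable {m n : ℕ}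

lemma trace_diag_form (f : Fin n → ℂ) (g : Fin m → ℂ)
    (X Y : Matrix (Fin m) (Fin n) ℂ) :
    Matrix.trace (Matrix.diagonal f * Xᴴ * Matrix.diagonal g * Y)
      = ∑ i, ∑ j, f j * (starRingEnd ℂ) (X i j) * g i * Y i j := by
  rw [Matrix.trace]
  simp only [Matrix.diag_apply, Matrix.mul_apply, Matrix.diagonal_apply,
    Matrix.conjTranspose_apply, ite_mul, zero_mul, Finset.sum_ite_eq,
    Finset.mem_univ, if_true, mul_ite, mul_zero, Finset.sum_ite_eq']
  rw [Finset.sum_comm]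
  refine Finset.sum_congr rfl fun i _ => ?_
  refine Finset.sum_congr rfl fun j _ => ?_
  rw [Complex.star_def]

lemma trace_conj2 (U : Matrix (Fin m) (Fin m) ℂ) (V : Matrix (Fin n) (Fin n) ℂ)
    (hU : Uᴴ * U = 1) (hV : Vᴴ * V = 1)
    (X : Matrix (Fin n) (Fin m) ℂ) (Y : Matrix (Fin m) (Fin n) ℂ) :
    Matrix.trace ((V * X * Uᴴ) * (U * Y * Vᴴ)) = Matrix.trace (X * Y) := by
  have hUc : ∀ Z : Matrix (Fin m) (Fin n) ℂ, Uᴴ * (U * Z) = Z := fun Z => by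
    rw [← Matrix.mul_assoc, hU, Matrix.one_mul]
  have h : (V * X * Uᴴ) * (U * Y * Vᴴ) = V * ((X * Y) * Vᴴ) := by
    simp only [Matrix.mul_assoc, hUc]
  rw [h, ← Matrix.mul_assoc, Matrix.trace_mul_cycle, ← Matrix.mul_assoc, hV,
    Matrix.one_mul]

lemma trace_conj4 (U : Matrix (Fin m) (Fin m) ℂ) (V : Matrix (Fin n) (Fin n) ℂ)
    (hU : Uᴴ * U = 1) (hV : Vᴴ * V = 1)
    (P : Matrix (Fin n) (Fin n) ℂ) (X : Matrix (Fin n) (Fin m) ℂ)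
    (Q : Matrix (Fin m) (Fin m) ℂ) (Y : Matrix (Fin m) (Fin n) ℂ) :
    Matrix.trace ((V * P * Vᴴ) * (V * X * Uᴴ) * (U * Q * Uᴴ) * (U * Y * Vᴴ))
      = Matrix.trace (P * X * Q * Y) := by
  have hUc : ∀ Z : Matrix (Fin m) (Fin n) ℂ, Uᴴ * (U * Z) = Z := fun Z => by
    rw [← Matrix.mul_assoc, hU, Matrix.one_mul]
  have hUc' : ∀ Z : Matrix (Fin m) (Fin m) ℂ, Uᴴ * (U * Z) = Z := fun Z => by
    rw [← Matrix.mul_assoc, hU, Matrix.one_mul]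
  have hVc : ∀ Z : Matrix (Fin n) (Fin m) ℂ, Vᴴ * (V * Z) = Z := fun Z => by
    rw [← Matrix.mul_assoc, hV, Matrix.one_mul]
  have h : (V * P * Vᴴ) * (V * X * Uᴴ) * (U * Q * Uᴴ) * (U * Y * Vᴴ)
      = V * ((P * X * Q * Y) * Vᴴ) := by
    simp only [Matrix.mul_assoc, hUc, hUc', hVc]
  rw [h, ← Matrix.mul_assoc, Matrix.trace_mul_cycle, ← Matrix.mul_assoc, hV,
    Matrix.one_mul]
open MeasureTheory Matrix Complex

lemma gauss1 (a : ℝ) (ha : 0 < a) (b c : ℂ) :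
    ∫ z : ℂ, Complex.exp (-(a:ℂ) * ((starRingEnd ℂ) z * z) + b * z + c * (starRingEnd ℂ) z)
      = ((Real.pi : ℂ) / a) * Complex.exp (b * c / a) := by
  have ha' : (a : ℂ) ≠ 0 := Complex.ofReal_ne_zero.2 ha.ne'
  have key := (Complex.volume_preserving_equiv_real_prod.symm).integral_comp'
    (fun z : ℂ => Complex.exp (-(a:ℂ) * ((starRingEnd ℂ) z * z) + b * z + c * (starRingEnd ℂ) z))
  rw [← key]
  have h1 : ∀ p : ℝ × ℝ,
      Complex.exp (-(a:ℂ) * ((starRingEnd ℂ) (Complex.measurableEquivRealProd.symm p) *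
          (Complex.measurableEquivRealProd.symm p)) + b * (Complex.measurableEquivRealProd.symm p)
          + c * (starRingEnd ℂ) (Complex.measurableEquivRealProd.symm p))
      = Complex.exp (-(a:ℂ) * (p.1:ℂ)^2 + (b + c) * (p.1:ℂ) + 0)
        * Complex.exp (-(a:ℂ) * (p.2:ℂ)^2 + ((b - c) * I) * (p.2:ℂ) + 0) := by
    intro p
    rw [← Complex.exp_add]
    congr 1
    simp only [Complex.measurableEquivRealProd_symm_apply]
    have : ((starRingEnd ℂ)) ⟨p.1, p.2⟩ = (p.1 : ℂ) - (p.2:ℂ) * I := by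
      apply Complex.ext <;> simp
    rw [this]
    have h2 : (⟨p.1, p.2⟩ : ℂ) = (p.1 : ℂ) + (p.2:ℂ) * I := by
      apply Complex.ext <;> simp
    rw [h2]
    have : I^2 = -1 := Complex.I_sq
    ring_nf
    rw [Complex.I_sq]
    ring
  simp_rw [h1]
  rw [Measure.volume_eq_prod, integral_prod_mul (fun x : ℝ => Complex.exp (-(a:ℂ) * (x:ℂ)^2 + (b + c) * (x:ℂ) + 0)) (fun y : ℝ => Complex.exp (-(a:ℂ) * (y:ℂ)^2 + ((b - c) * I) * (y:ℂ) + 0))]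
  have hre : (-(a:ℂ)).re < 0 := by simpa using ha
  rw [integral_cexp_quadratic hre (b+c) 0, integral_cexp_quadratic hre ((b-c)*I) 0]
  have hπa : ((Real.pi : ℂ) / -(-(a:ℂ))) ≠ 0 := by
    simp [Real.pi_ne_zero, ha']
  calc ((Real.pi:ℂ) / -(-(a:ℂ))) ^ (1/2 : ℂ) * Complex.exp (0 - (b+c)^2 / (4 * -(a:ℂ))) *
        (((Real.pi:ℂ) / -(-(a:ℂ))) ^ (1/2 : ℂ) * Complex.exp (0 - ((b-c)*I)^2 / (4 * -(a:ℂ))))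
      = (((Real.pi:ℂ) / -(-(a:ℂ))) ^ (1/2 : ℂ) * ((Real.pi:ℂ) / -(-(a:ℂ))) ^ (1/2 : ℂ)) *
        (Complex.exp (0 - (b+c)^2 / (4 * -(a:ℂ))) * Complex.exp (0 - ((b-c)*I)^2 / (4 * -(a:ℂ)))) := by
        ring
    _ = ((Real.pi : ℂ) / a) * Complex.exp (b * c / a) := by
        rw [← Complex.cpow_add _ _ hπa, ← Complex.exp_add]
        norm_num
        congr 1
        have : ((b-c)*I)^2 = -(b-c)^2 := by
          rw [mul_pow, Complex.I_sq]; ring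
        rw [this]
        field_simp
        ring
        exact Or.inl trivial

set_option maxHeartbeats 2000000 in
/-- Gaussian matrix integral (Lemma 1 of the paper). -/
theorem statement0 (m n : ℕ) (hm : 0 < m) (hn : 0 < n)
    (A1 A2 : Matrix (Fin m) (Fin n) ℂ)
    (A3 : Matrix (Fin n) (Fin n) ℂ) (A4 : Matrix (Fin m) (Fin m) ℂ)
    (hA3 : A3.PosDef) (hA4 : A4.PosDef) :
    (1 / (Real.pi : ℂ) ^ (m * n)) *
      (∫ S : Fin m → Fin n → ℂ,
        Complex.exp (-Matrix.trace (A3 * (Matrix.of S)ᴴ * A4 * Matrix.of S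
          + A1ᴴ * Matrix.of S - (Matrix.of S)ᴴ * A2))) =
    (Matrix.det (A3 ⊗ₖ A4))⁻¹ *
      Complex.exp (-Matrix.trace (A3⁻¹ * A1ᴴ * A4⁻¹ * A2)) := by
  classical
  have hH3 := hA3.1
  have hH4 := hA4.1
  set V : Matrix (Fin n) (Fin n) ℂ := (hH3.eigenvectorUnitary : Matrix (Fin n) (Fin n) ℂ) with hVdef
  set U : Matrix (Fin m) (Fin m) ℂ := (hH4.eigenvectorUnitary : Matrix (Fin m) (Fin m) ℂ) with hUdef
  set d3 : Fin n → ℝ := hH3.eigenvalues with hd3def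
  set d4 : Fin m → ℝ := hH4.eigenvalues with hd4def
  have hd3 : ∀ j, 0 < d3 j := hA3.eigenvalues_pos
  have hd4 : ∀ i, 0 < d4 i := hA4.eigenvalues_pos
  have hV1 : Vᴴ * V = 1 := by
    rw [← Matrix.star_eq_conjTranspose]
    exact (Unitary.mem_iff.mp hH3.eigenvectorUnitary.prop).1
  have hV2 : V * Vᴴ = 1 := by
    rw [← Matrix.star_eq_conjTranspose]
    exact (Unitary.mem_iff.mp hH3.eigenvectorUnitary.prop).2
  have hU1 : Uᴴ * U = 1 := by
    rw [← Matrix.star_eq_conjTranspose]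
    exact (Unitary.mem_iff.mp hH4.eigenvectorUnitary.prop).1
  have hU2 : U * Uᴴ = 1 := by
    rw [← Matrix.star_eq_conjTranspose]
    exact (Unitary.mem_iff.mp hH4.eigenvectorUnitary.prop).2
  set D3 : Matrix (Fin n) (Fin n) ℂ := Matrix.diagonal (fun j => (d3 j : ℂ)) with hD3def
  set D4 : Matrix (Fin m) (Fin m) ℂ := Matrix.diagonal (fun i => (d4 i : ℂ)) with hD4def
  have hA3e : A3 = V * D3 * Vᴴ := by
    conv_lhs => rw [hH3.spectral_theorem]
    rw [← Matrix.star_eq_conjTranspose]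
    rfl
  have hA4e : A4 = U * D4 * Uᴴ := by
    conv_lhs => rw [hH4.spectral_theorem]
    rw [← Matrix.star_eq_conjTranspose]
    rfl
  set B1 : Matrix (Fin m) (Fin n) ℂ := Uᴴ * A1 * V with hB1def
  set B2 : Matrix (Fin m) (Fin n) ℂ := Uᴴ * A2 * V with hB2def
  have hA1e : A1 = U * B1 * Vᴴ := by
    rw [hB1def]
    have : U * (Uᴴ * A1 * V) * Vᴴ = (U * Uᴴ) * A1 * (V * Vᴴ) := by
      simp only [Matrix.mul_assoc]
    rw [this, hU2, hV2, Matrix.one_mul, Matrix.mul_one]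
  have hA2e : A2 = U * B2 * Vᴴ := by
    rw [hB2def]
    have : U * (Uᴴ * A2 * V) * Vᴴ = (U * Uᴴ) * A2 * (V * Vᴴ) := by
      simp only [Matrix.mul_assoc]
    rw [this, hU2, hV2, Matrix.one_mul, Matrix.mul_one]
  -- change of variables
  have hW : Vᴴ * (Vᴴ)ᴴ = 1 := by rw [Matrix.conjTranspose_conjTranspose]; exact hV1
  have hMP := measPres_mulLR U Vᴴ hU1 hW
  -- build measurable equiv
  have hcomp1 : ∀ S : Fin m → Fin n → ℂ, (mulLR U Vᴴ) ((mulLR Uᴴ V) S) = S := by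
    intro S; funext i j
    show (U * Matrix.of (fun i j => (Uᴴ * Matrix.of S * V) i j) * Vᴴ) i j = S i j
    have h0 : Matrix.of (fun i j => (Uᴴ * Matrix.of S * V) i j) = Uᴴ * Matrix.of S * V := rfl
    rw [h0]
    have h2 : U * (Uᴴ * Matrix.of S * V) * Vᴴ = (U * Uᴴ) * Matrix.of S * (V * Vᴴ) := by
      simp only [Matrix.mul_assoc]
    rw [h2, hU2, hV2, Matrix.one_mul, Matrix.mul_one]
    rfl
  have hcomp2 : ∀ S : Fin m → Fin n → ℂ, (mulLR Uᴴ V) ((mulLR U Vᴴ) S) = S := by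
    intro S; funext i j
    show (Uᴴ * Matrix.of (fun i j => (U * Matrix.of S * Vᴴ) i j) * V) i j = S i j
    have h0 : Matrix.of (fun i j => (U * Matrix.of S * Vᴴ) i j) = U * Matrix.of S * Vᴴ := rfl
    rw [h0]
    have h2 : Uᴴ * (U * Matrix.of S * Vᴴ) * V = (Uᴴ * U) * Matrix.of S * (Vᴴ * V) := by
      simp only [Matrix.mul_assoc]
    rw [h2, hU1, hV1, Matrix.one_mul, Matrix.mul_one]
    rfl
  set eL : (Fin m → Fin n → ℂ) ≃ₗ[ℝ] (Fin m → Fin n → ℂ) :=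
    LinearEquiv.ofLinear (mulLR U Vᴴ) (mulLR Uᴴ V)
      (LinearMap.ext hcomp1)
      (LinearMap.ext hcomp2) with heLdef
  set Φ : (Fin m → Fin n → ℂ) ≃ᵐ (Fin m → Fin n → ℂ) :=
    eL.toContinuousLinearEquiv.toHomeomorph.toMeasurableEquiv with hPhidef
  have hMP' : MeasurePreserving (⇑Φ) volume volume := hMP
  have hint := hMP'.integral_comp' (fun S : Fin m → Fin n → ℂ =>
    Complex.exp (-Matrix.trace (A3 * (Matrix.of S)ᴴ * A4 * Matrix.of S
      + A1ᴴ * Matrix.of S - (Matrix.of S)ᴴ * A2)))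
  rw [← hint]
  -- pointwise rewrite of the integrand
  set G : Fin m → Fin n → ℂ → ℂ := fun i j z =>
    -((d4 i * d3 j : ℝ) : ℂ) * ((starRingEnd ℂ) z * z)
      + (-(starRingEnd ℂ) (B1 i j)) * z + B2 i j * (starRingEnd ℂ) z with hGdef
  have hpt : ∀ T : Fin m → Fin n → ℂ,
      Complex.exp (-Matrix.trace (A3 * (Matrix.of (Φ T))ᴴ * A4 * Matrix.of (Φ T)
        + A1ᴴ * Matrix.of (Φ T) - (Matrix.of (Φ T))ᴴ * A2))
      = ∏ i, ∏ j, Complex.exp (G i j (T i j)) := by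
    intro T
    have hofPhi : Matrix.of (Φ T) = U * Matrix.of T * Vᴴ := rfl
    have hSH : (U * Matrix.of T * Vᴴ)ᴴ = V * (Matrix.of T)ᴴ * Uᴴ := by
      rw [Matrix.conjTranspose_mul, Matrix.conjTranspose_mul,
        Matrix.conjTranspose_conjTranspose, ← Matrix.mul_assoc]
    rw [hofPhi, hSH, Matrix.trace_sub, Matrix.trace_add, hA3e, hA4e, hA1e, hA2e]
    have hA1H : (U * B1 * Vᴴ)ᴴ = V * B1ᴴ * Uᴴ := by
      rw [Matrix.conjTranspose_mul, Matrix.conjTranspose_mul,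
        Matrix.conjTranspose_conjTranspose, ← Matrix.mul_assoc]
    rw [hA1H]
    rw [trace_conj4 U V hU1 hV1 D3 (Matrix.of T)ᴴ D4 (Matrix.of T)]
    rw [trace_conj2 U V hU1 hV1 B1ᴴ (Matrix.of T)]
    rw [trace_conj2 U V hU1 hV1 (Matrix.of T)ᴴ B2]
    rw [hD3def, hD4def, trace_diag_form, trace_conj_entries B1 (Matrix.of T),
      trace_conj_entries (Matrix.of T) B2]
    have harg : -((∑ i, ∑ j, (d3 j : ℂ) * (starRingEnd ℂ) (Matrix.of T i j) * (d4 i : ℂ)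
          * Matrix.of T i j)
        + (∑ i, ∑ j, (starRingEnd ℂ) (B1 i j) * Matrix.of T i j)
        - (∑ i, ∑ j, (starRingEnd ℂ) (Matrix.of T i j) * B2 i j))
        = ∑ i, ∑ j, G i j (T i j) := by
      rw [← Finset.sum_add_distrib, ← Finset.sum_sub_distrib, ← Finset.sum_neg_distrib]
      refine Finset.sum_congr rfl fun i _ => ?_
      rw [← Finset.sum_add_distrib, ← Finset.sum_sub_distrib, ← Finset.sum_neg_distrib]
      refine Finset.sum_congr rfl fun j _ => ?_
      rw [hGdef]
      have : Matrix.of T i j = T i j := rfl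
      rw [this]
      push_cast
      ring
    rw [harg, Complex.exp_sum]
    exact Finset.prod_congr rfl fun i _ => Complex.exp_sum _ _
  have hfun : (fun T : Fin m → Fin n → ℂ =>
      Complex.exp (-Matrix.trace (A3 * (Matrix.of (Φ T))ᴴ * A4 * Matrix.of (Φ T)
        + A1ᴴ * Matrix.of (Φ T) - (Matrix.of (Φ T))ᴴ * A2)))
      = fun T => ∏ i, ∏ j, Complex.exp (G i j (T i j)) := funext hpt
  rw [hfun]
  -- Fubini
  rw [MeasureTheory.volume_pi, MeasureTheory.integral_fintype_prod_eq_prod (ι := Fin m)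
    (fun i (x : Fin n → ℂ) => ∏ j, Complex.exp (G i j (x j)))]
  have hfub2 : ∀ i : Fin m, (∫ x : Fin n → ℂ, ∏ j, Complex.exp (G i j (x j)))
      = ∏ j, ∫ z : ℂ, Complex.exp (G i j z) :=
    fun i => MeasureTheory.integral_fintype_prod_eq_prod (ι := Fin n)
      (fun j (z : ℂ) => Complex.exp (G i j z))
  rw [Finset.prod_congr rfl fun i _ => hfub2 i]
  -- 1D Gaussians
  have hgauss : ∀ i j, (∫ z : ℂ, Complex.exp (G i j z))
      = ((Real.pi : ℂ) / ((d4 i * d3 j : ℝ) : ℂ)) *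
        Complex.exp ((-(starRingEnd ℂ) (B1 i j)) * B2 i j / ((d4 i * d3 j : ℝ) : ℂ)) := by
    intro i j
    exact gauss1 (d4 i * d3 j) (mul_pos (hd4 i) (hd3 j)) (-(starRingEnd ℂ) (B1 i j)) (B2 i j)
  rw [Finset.prod_congr rfl fun i _ => Finset.prod_congr rfl fun j _ => hgauss i j]
  -- split the product
  rw [Finset.prod_congr rfl fun i (_ : i ∈ Finset.univ) => Finset.prod_mul_distrib,
    Finset.prod_mul_distrib]
  rw [Finset.prod_congr rfl fun i (_ : i ∈ Finset.univ) =>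
    (Complex.exp_sum Finset.univ _).symm, (Complex.exp_sum Finset.univ _).symm]
  -- now identify the two factors
  have hπ : (Real.pi : ℂ) ≠ 0 := Complex.ofReal_ne_zero.2 Real.pi_ne_zero
  have hd3c : ∀ j, ((d3 j : ℂ)) ≠ 0 := fun j => Complex.ofReal_ne_zero.2 (hd3 j).ne'
  have hd4c : ∀ i, ((d4 i : ℂ)) ≠ 0 := fun i => Complex.ofReal_ne_zero.2 (hd4 i).ne'
  -- determinant part
  have hdetA3 : A3.det = ∏ j, (d3 j : ℂ) := by
    rw [hA3e, Matrix.det_mul, Matrix.det_mul]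
    have hVdet : V.det * Vᴴ.det = 1 := by rw [← Matrix.det_mul, hV2, Matrix.det_one]
    calc V.det * D3.det * Vᴴ.det = (V.det * Vᴴ.det) * D3.det := by ring
      _ = D3.det := by rw [hVdet, one_mul]
      _ = ∏ j, (d3 j : ℂ) := by rw [hD3def, Matrix.det_diagonal]
  have hdetA4 : A4.det = ∏ i, (d4 i : ℂ) := by
    rw [hA4e, Matrix.det_mul, Matrix.det_mul]
    have hUdet : U.det * Uᴴ.det = 1 := by rw [← Matrix.det_mul, hU2, Matrix.det_one]
    calc U.det * D4.det * Uᴴ.det = (U.det * Uᴴ.det) * D4.det := by ring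
      _ = D4.det := by rw [hUdet, one_mul]
      _ = ∏ i, (d4 i : ℂ) := by rw [hD4def, Matrix.det_diagonal]
  have hdetK : (A3 ⊗ₖ A4).det = (∏ j, (d3 j : ℂ)) ^ m * (∏ i, (d4 i : ℂ)) ^ n := by
    rw [Matrix.det_kronecker, hdetA3, hdetA4, Fintype.card_fin, Fintype.card_fin]
  have hprodpi : (∏ i : Fin m, ∏ j : Fin n, ((Real.pi : ℂ) / ((d4 i * d3 j : ℝ) : ℂ)))
      = (Real.pi : ℂ) ^ (m * n) / ((∏ j, (d3 j : ℂ)) ^ m * (∏ i, (d4 i : ℂ)) ^ n) := by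
    have h1 : ∀ i : Fin m, (∏ j : Fin n, ((Real.pi : ℂ) / ((d4 i * d3 j : ℝ) : ℂ)))
        = (Real.pi : ℂ) ^ n / ((d4 i : ℂ) ^ n * ∏ j, (d3 j : ℂ)) := by
      intro i
      rw [Finset.prod_div_distrib, Finset.prod_const, Finset.card_univ, Fintype.card_fin]
      congr 1
      push_cast
      rw [Finset.prod_mul_distrib, Finset.prod_const, Finset.card_univ, Fintype.card_fin]
    rw [Finset.prod_congr rfl fun i _ => h1 i, Finset.prod_div_distrib, Finset.prod_const,
      Finset.card_univ, Fintype.card_fin, ← pow_mul, Finset.prod_mul_distrib,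
      Finset.prod_pow, Finset.prod_const, Finset.card_univ, Fintype.card_fin]
    rw [mul_comm n m]
    congr 1
    ring
  -- trace part
  set D3i : Matrix (Fin n) (Fin n) ℂ := Matrix.diagonal (fun j => (d3 j : ℂ)⁻¹) with hD3idef
  set D4i : Matrix (Fin m) (Fin m) ℂ := Matrix.diagonal (fun i => (d4 i : ℂ)⁻¹) with hD4idef
  have hA3inv : A3⁻¹ = V * D3i * Vᴴ := by
    apply Matrix.inv_eq_right_inv
    rw [hA3e]
    have : (V * D3 * Vᴴ) * (V * D3i * Vᴴ) = V * (D3 * (Vᴴ * V) * D3i) * Vᴴ := by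
      simp only [Matrix.mul_assoc]
    rw [this, hV1, Matrix.mul_one, hD3def, hD3idef, Matrix.diagonal_mul_diagonal]
    have : (fun j => (d3 j : ℂ) * (d3 j : ℂ)⁻¹) = fun _ => (1 : ℂ) := by
      funext j; exact mul_inv_cancel₀ (hd3c j)
    rw [this, Matrix.diagonal_one, Matrix.mul_one, hV2]
  have hA4inv : A4⁻¹ = U * D4i * Uᴴ := by
    apply Matrix.inv_eq_right_inv
    rw [hA4e]
    have : (U * D4 * Uᴴ) * (U * D4i * Uᴴ) = U * (D4 * (Uᴴ * U) * D4i) * Uᴴ := by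
      simp only [Matrix.mul_assoc]
    rw [this, hU1, Matrix.mul_one, hD4def, hD4idef, Matrix.diagonal_mul_diagonal]
    have : (fun i => (d4 i : ℂ) * (d4 i : ℂ)⁻¹) = fun _ => (1 : ℂ) := by
      funext i; exact mul_inv_cancel₀ (hd4c i)
    rw [this, Matrix.diagonal_one, Matrix.mul_one, hU2]
  have hA1H : A1ᴴ = V * B1ᴴ * Uᴴ := by
    rw [hA1e, Matrix.conjTranspose_mul, Matrix.conjTranspose_mul,
      Matrix.conjTranspose_conjTranspose, ← Matrix.mul_assoc]
  have htraceR : Matrix.trace (A3⁻¹ * A1ᴴ * A4⁻¹ * A2)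
      = ∑ i, ∑ j, (d3 j : ℂ)⁻¹ * (starRingEnd ℂ) (B1 i j) * (d4 i : ℂ)⁻¹ * B2 i j := by
    rw [hA3inv, hA4inv, hA1H]
    conv_lhs => rw [hA2e]
    rw [trace_conj4 U V hU1 hV1 D3i B1ᴴ D4i B2, hD3idef, hD4idef, trace_diag_form]
  have hsum_eq : (∑ i, ∑ j, (-(starRingEnd ℂ) (B1 i j)) * B2 i j / ((d4 i * d3 j : ℝ) : ℂ))
      = -Matrix.trace (A3⁻¹ * A1ᴴ * A4⁻¹ * A2) := by
    rw [htraceR, ← Finset.sum_neg_distrib]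
    refine Finset.sum_congr rfl fun i _ => ?_
    rw [← Finset.sum_neg_distrib]
    refine Finset.sum_congr rfl fun j _ => ?_
    push_cast
    field_simp
  rw [hprodpi, hsum_eq, hdetK]
  have hpow : ((Real.pi : ℂ)) ^ (m * n) ≠ 0 := pow_ne_zero _ hπ
  field_simp
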